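/- Let K be a field, R = K⟨x,y⟩/(x², y³, (x+y)⁴), and J the two-sided ideal of R generated by x and y. If f = θ₁·xy + θ₂·yx + θ₃·y² + g with θ₁, θ₂, θ₃ ∈ K, g ∈ J³, and (x + y + f)⁴ = 0 in R, then θ₁ + θ₂ = 2θ₃. -/

import Mathlib

noncomputable section

/-- The relations `x² = 0`, `y³ = 0`, `(x+y)⁴ = 0` on `K⟨x,y⟩`, with `x = ι 0`, `y = ι 1`. -/
inductive Rel7 (K : Type*) [CommRing K] :
    FreeAlgebra K (Fin 2) → FreeAlgebra K (Fin 2) → Prop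
  | xx : Rel7 K (FreeAlgebra.ι K 0 * FreeAlgebra.ι K 0) 0
  | yyy : Rel7 K (FreeAlgebra.ι K 1 * (FreeAlgebra.ι K 1 * FreeAlgebra.ι K 1)) 0
  | pow : Rel7 K ((FreeAlgebra.ι K 0 + FreeAlgebra.ι K 1) ^ 4) 0

/-- The algebra `R(E₇) = K⟨x,y⟩/(x², y³, (x+y)⁴)`. -/
abbrev RE7 (K : Type*) [CommRing K] := RingQuot (Rel7 K)

/-- The image of `x` in `R(E₇)`. -/
def e7x (K : Type*) [CommRing K] : RE7 K :=
  RingQuot.mkRingHom (Rel7 K) (FreeAlgebra.ι K 0)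

/-- The image of `y` in `R(E₇)`. -/
def e7y (K : Type*) [CommRing K] : RE7 K :=
  RingQuot.mkRingHom (Rel7 K) (FreeAlgebra.ι K 1)

/-- The two-sided ideal of `R(E₇)` generated by `x` and `y`, viewed as a `K`-submodule
(so that its powers are available via submodule multiplication). -/
def JE7 (K : Type*) [CommRing K] : Submodule K (RE7 K) :=
  ⊤ * Submodule.span K {e7x K, e7y K} * ⊤

namespace E7Aux


abbrev M8 (K : Type*) [CommRing K] := Matrix (Fin 8) (Fin 8) K

def XZ : Matrix (Fin 8) (Fin 8) ℤ :=
  !![0,0,0,0,0,0,0,0; 0,0,0,0,0,0,0,0; 0,1,0,0,0,0,0,0; 0,0,0,0,0,0,0,0;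
     0,0,0,1,0,0,0,0; 0,0,0,0,0,0,0,0; 0,0,0,0,0,1,0,0; 0,0,0,0,0,0,0,0]

def YZ : Matrix (Fin 8) (Fin 8) ℤ :=
  !![0,0,0,0,0,0,0,0; 1,0,0,0,0,0,0,0; 0,0,0,0,0,0,0,0; 0,1,0,0,0,0,0,0;
     0,0,0,0,0,0,0,0; 0,0,1,0,0,0,0,0; 0,0,0,0,-1,0,0,0; 0,0,0,0,0,0,1,0]

def dE : Fin 8 → ℕ := ![0,1,2,2,3,3,4,5]

lemma dE_le (i : Fin 8) : dE i ≤ 5 := by fin_cases i <;> decide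

variable (K : Type*) [CommRing K]

/-- entrywise integer cast as a ring hom on 8×8 matrices -/
def cM : Matrix (Fin 8) (Fin 8) ℤ →+* M8 K := (Int.castRingHom K).mapMatrix

lemma cM_apply (A : Matrix (Fin 8) (Fin 8) ℤ) (i j : Fin 8) :
    cM K A i j = ((A i j : ℤ) : K) := rfl

/-- the degree filtration on 8×8 matrices -/
def DF (k : ℕ) : Submodule K (M8 K) where
  carrier := {A | ∀ i j, dE i < min (dE j + k) 6 → A i j = 0}
  add_mem' := by
    intro A B hA hB i j h
    show A i j + B i j = 0
    rw [hA i j h, hB i j h, add_zero]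
  zero_mem' := by intro i j h; rfl
  smul_mem' := by
    intro c A hA i j h
    show c * A i j = 0
    rw [hA i j h, mul_zero]

lemma DF_mul {a b : ℕ} {A B : M8 K} (hA : A ∈ DF K a) (hB : B ∈ DF K b) :
    A * B ∈ DF K (a + b) := by
  intro i j h
  rw [Matrix.mul_apply]
  apply Finset.sum_eq_zero
  intro l _
  by_cases hl : dE l < min (dE j + b) 6
  · rw [hB l j hl, mul_zero]
  · rw [hA i l ?_, zero_mul]
    have := dE_le l
    have := dE_le i
    omega

lemma DF_anti {a b : ℕ} (hab : a ≤ b) : DF K b ≤ DF K a := by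
  intro A hA i j h
  exact hA i j (by omega)

lemma DF_six {A : M8 K} (h : A ∈ DF K 6) : A = 0 := by
  ext i j
  exact h i j (by have := dE_le i; omega)

lemma one_mem_DF : (1 : M8 K) ∈ DF K 0 := by
  intro i j h
  have hij : i ≠ j := by
    rintro rfl
    have := dE_le i
    omega
  exact Matrix.one_apply_ne hij

lemma XK_mem : cM K XZ ∈ DF K 1 := by
  intro i j h
  rw [cM_apply]
  have h0 : ∀ i j : Fin 8, dE i < min (dE j + 1) 6 → XZ i j = 0 := by
    intro i j; fin_cases i <;> fin_cases j <;> decide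
  rw [h0 i j h, Int.cast_zero]

lemma YK_mem : cM K YZ ∈ DF K 1 := by
  intro i j h
  rw [cM_apply]
  have h0 : ∀ i j : Fin 8, dE i < min (dE j + 1) 6 → YZ i j = 0 := by
    intro i j; fin_cases i <;> fin_cases j <;> decide
  rw [h0 i j h, Int.cast_zero]

def gens : Fin 2 → M8 K := ![cM K XZ, cM K YZ]

def rep : FreeAlgebra K (Fin 2) →ₐ[K] M8 K := FreeAlgebra.lift K (gens K)

lemma rep_rel : ∀ ⦃u v : FreeAlgebra K (Fin 2)⦄, Rel7 K u v → rep K u = rep K v := by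
  intro u v h
  cases h with
  | xx =>
      show rep K (FreeAlgebra.ι K 0 * FreeAlgebra.ι K 0) = rep K 0
      rw [map_mul, map_zero, rep, FreeAlgebra.lift_ι_apply]
      show gens K 0 * gens K 0 = 0
      show cM K XZ * cM K XZ = 0
      rw [← map_mul, show XZ * XZ = 0 from by decide, map_zero]
  | yyy =>
      show rep K (FreeAlgebra.ι K 1 * (FreeAlgebra.ι K 1 * FreeAlgebra.ι K 1)) = rep K 0
      rw [map_mul, map_mul, map_zero, rep, FreeAlgebra.lift_ι_apply]
      show cM K YZ * (cM K YZ * cM K YZ) = 0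
      rw [← map_mul, ← map_mul, show YZ * (YZ * YZ) = 0 from by decide, map_zero]
  | pow =>
      show rep K ((FreeAlgebra.ι K 0 + FreeAlgebra.ι K 1) ^ 4) = rep K 0
      rw [map_pow, map_add, map_zero, rep, FreeAlgebra.lift_ι_apply, FreeAlgebra.lift_ι_apply]
      show (cM K XZ + cM K YZ) ^ 4 = 0
      rw [← map_add, ← map_pow, show (XZ + YZ) ^ 4 = 0 from by decide, map_zero]

def φa : RE7 K →ₐ[K] M8 K := RingQuot.liftAlgHom K ⟨rep K, rep_rel K⟩

lemma mk_eq (a : FreeAlgebra K (Fin 2)) :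
    RingQuot.mkRingHom (Rel7 K) a = RingQuot.mkAlgHom K (Rel7 K) a :=
  (RingHom.congr_fun (RingQuot.mkAlgHom_coe K (Rel7 K)) a).symm

lemma φ_x : φa K (e7x K) = cM K XZ := by
  rw [e7x, mk_eq, φa, RingQuot.liftAlgHom_mkAlgHom_apply, rep, FreeAlgebra.lift_ι_apply]
  rfl

lemma φ_y : φa K (e7y K) = cM K YZ := by
  rw [e7y, mk_eq, φa, RingQuot.liftAlgHom_mkAlgHom_apply, rep, FreeAlgebra.lift_ι_apply]
  rfl

lemma φ_mem_DF0 (r : RE7 K) : φa K r ∈ DF K 0 := by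
  obtain ⟨a, rfl⟩ := RingQuot.mkAlgHom_surjective K (Rel7 K) r
  rw [φa, RingQuot.liftAlgHom_mkAlgHom_apply]
  induction a with
  | grade0 r =>
      rw [AlgHom.commutes, Algebra.algebraMap_eq_smul_one]
      exact Submodule.smul_mem _ _ (one_mem_DF K)
  | grade1 i =>
      rw [rep, FreeAlgebra.lift_ι_apply]
      fin_cases i
      · exact DF_anti K (by omega) (XK_mem K)
      · exact DF_anti K (by omega) (YK_mem K)
  | mul a b ha hb =>
      rw [map_mul]
      exact DF_mul K ha hb
  | add a b ha hb =>
      rw [map_add]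
      exact add_mem ha hb


lemma mapJ : Submodule.map (φa K).toLinearMap (JE7 K) ≤ DF K 1 := by
  have h0 : Submodule.map (φa K).toLinearMap ⊤ ≤ DF K 0 := by
    rintro _ ⟨r, -, rfl⟩
    exact φ_mem_DF0 K r
  have h1 : Submodule.map (φa K).toLinearMap (Submodule.span K {e7x K, e7y K}) ≤ DF K 1 := by
    rw [Submodule.map_span]
    apply Submodule.span_le.2
    rintro _ ⟨z, hz, rfl⟩
    rcases hz with rfl | rfl
    · rw [AlgHom.toLinearMap_apply, φ_x]; exact XK_mem K
    · rw [AlgHom.toLinearMap_apply, φ_y]; exact YK_mem K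
  rw [JE7, Submodule.map_mul, Submodule.map_mul]
  refine le_trans (mul_le_mul' (mul_le_mul' h0 h1) h0) ?_
  refine le_trans (mul_le_mul' (Submodule.mul_le.2 fun a ha b hb => DF_mul K ha hb)
    le_rfl) ?_
  exact Submodule.mul_le.2 fun a ha b hb => DF_mul K ha hb

lemma DF_pow : ∀ n : ℕ, (DF K 1) ^ (n + 1) ≤ DF K (n + 1) := by
  intro n
  induction n with
  | zero => rw [pow_one]
  | succ k ih =>
      rw [pow_succ]
      refine le_trans (mul_le_mul' ih le_rfl) ?_
      exact Submodule.mul_le.2 fun a ha b hb => DF_mul K ha hb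

lemma mapJ6 : ∀ w ∈ (JE7 K) ^ 6, φa K w = 0 := by
  intro w hw
  have h : φa K w ∈ Submodule.map (φa K).toLinearMap ((JE7 K) ^ 6) :=
    Submodule.mem_map_of_mem hw
  rw [Submodule.map_pow] at h
  have h2 : φa K w ∈ DF K 6 := by
    refine DF_pow K 5 ?_
    exact pow_le_pow_left' (mapJ K) 6 h
  exact DF_six K h2


variable (K : Type*) [CommRing K] in
lemma Jtop : JE7 K * ⊤ ≤ JE7 K := by
  rw [JE7, mul_assoc]
  exact mul_le_mul' le_rfl le_top

variable (K : Type*) [CommRing K] in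
lemma Jdrop (k : ℕ) : JE7 K ^ (k + 2) ≤ JE7 K ^ (k + 1) := by
  calc JE7 K ^ (k + 2) = JE7 K ^ (k + 1) * JE7 K := pow_succ _ _
    _ ≤ JE7 K ^ (k + 1) * ⊤ := mul_le_mul' le_rfl le_top
    _ = JE7 K ^ k * (JE7 K * ⊤) := by rw [pow_succ, mul_assoc]
    _ ≤ JE7 K ^ k * JE7 K := mul_le_mul' le_rfl (Jtop K)
    _ = JE7 K ^ (k + 1) := (pow_succ _ _).symm

variable (K : Type*) [CommRing K] in
lemma mulmem {a b : ℕ} {u v : RE7 K} (hu : u ∈ JE7 K ^ a) (hv : v ∈ JE7 K ^ b) :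
    u * v ∈ JE7 K ^ (a + b) := by
  rw [pow_add]; exact Submodule.mul_mem_mul hu hv

variable (K : Type*) [CommRing K] in
lemma xJ : e7x K ∈ JE7 K := by
  have h1 : e7x K ∈ Submodule.span K {e7x K, e7y K} := Submodule.subset_span (by simp)
  have h2 : (1 : RE7 K) * e7x K * 1 ∈
      ⊤ * Submodule.span K {e7x K, e7y K} * ⊤ :=
    Submodule.mul_mem_mul (Submodule.mul_mem_mul Submodule.mem_top h1) Submodule.mem_top
  simpa [JE7] using h2

variable (K : Type*) [CommRing K] in
lemma yJ : e7y K ∈ JE7 K := by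
  have h1 : e7y K ∈ Submodule.span K {e7x K, e7y K} := Submodule.subset_span (by simp)
  have h2 : (1 : RE7 K) * e7y K * 1 ∈
      ⊤ * Submodule.span K {e7x K, e7y K} * ⊤ :=
    Submodule.mul_mem_mul (Submodule.mul_mem_mul Submodule.mem_top h1) Submodule.mem_top
  simpa [JE7] using h2

lemma expand4 {A : Type*} [Ring A] (s m g : A) :
    (s + (m + g)) ^ 4 =
      s*(s*(s*s)) +
      (s*(s*(s*m)) + s*(s*(m*s)) + s*(m*(s*s)) + m*(s*(s*s))) +
      (s*(s*(s*g)) + s*(s*(g*s)) + s*(g*(s*s)) + g*(s*(s*s)) +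
       (s*(s*((m+g)*(m+g))) + s*((m+g)*(s*(m+g))) + s*((m+g)*((m+g)*s)) +
        (m+g)*(s*(s*(m+g))) + (m+g)*(s*((m+g)*s)) + (m+g)*((m+g)*(s*s)) +
        s*((m+g)*((m+g)*(m+g))) + (m+g)*(s*((m+g)*(m+g))) + (m+g)*((m+g)*(s*(m+g))) +
        (m+g)*((m+g)*((m+g)*s)) + (m+g)*((m+g)*((m+g)*(m+g))))) := by
  noncomm_ring

lemma he1 : ((XZ + YZ) * ((XZ + YZ) * ((XZ + YZ) * (XZ * YZ)))) 7 0 = (1 : ℤ) := by decide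
lemma he2 : ((XZ + YZ) * ((XZ + YZ) * ((XZ + YZ) * (YZ * XZ)))) 7 0 = (0 : ℤ) := by decide
lemma he3 : ((XZ + YZ) * ((XZ + YZ) * ((XZ + YZ) * (YZ * YZ)))) 7 0 = (-1 : ℤ) := by decide
lemma he4 : ((XZ + YZ) * ((XZ + YZ) * (XZ * YZ * (XZ + YZ)))) 7 0 = (-1 : ℤ) := by decide
lemma he5 : ((XZ + YZ) * ((XZ + YZ) * (YZ * XZ * (XZ + YZ)))) 7 0 = (1 : ℤ) := by decide
lemma he6 : ((XZ + YZ) * ((XZ + YZ) * (YZ * YZ * (XZ + YZ)))) 7 0 = (0 : ℤ) := by decide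
lemma he7 : ((XZ + YZ) * (XZ * YZ * (XZ * XZ + YZ * XZ + (XZ * YZ + YZ * YZ)))) 7 0 = (1 : ℤ) := by decide
lemma he8 : ((XZ + YZ) * (YZ * XZ * (XZ * XZ + YZ * XZ + (XZ * YZ + YZ * YZ)))) 7 0 = (-1 : ℤ) := by decide
lemma he9 : ((XZ + YZ) * (YZ * YZ * (XZ * XZ + YZ * XZ + (XZ * YZ + YZ * YZ)))) 7 0 = (0 : ℤ) := by decide
lemma he10 : (XZ * YZ * (XZ * (XZ * XZ) + YZ * (XZ * XZ) + (XZ * (YZ * XZ) + YZ * (YZ * XZ)) + (XZ * (XZ * YZ) + YZ * (XZ * YZ) + (XZ * (YZ * YZ) + YZ * (YZ * YZ))))) 7 0 = (0 : ℤ) := by decide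
lemma he11 : (YZ * XZ * (XZ * (XZ * XZ) + YZ * (XZ * XZ) + (XZ * (YZ * XZ) + YZ * (YZ * XZ)) + (XZ * (XZ * YZ) + YZ * (XZ * YZ) + (XZ * (YZ * YZ) + YZ * (YZ * YZ))))) 7 0 = (1 : ℤ) := by decide
lemma he12 : (YZ * YZ * (XZ * (XZ * XZ) + YZ * (XZ * XZ) + (XZ * (YZ * XZ) + YZ * (YZ * XZ)) + (XZ * (XZ * YZ) + YZ * (XZ * YZ) + (XZ * (YZ * YZ) + YZ * (YZ * YZ))))) 7 0 = (-1 : ℤ) := by decide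

end E7Aux

open E7Aux

/-- Let `K` be a field and `R(E₇) = K⟨x,y⟩/(x², y³, (x+y)⁴)`, with `J` the two-sided ideal
generated by `x` and `y`. If `f = θ₁·xy + θ₂·yx + θ₃·y² + g` with `g ∈ J³` and
`(x + y + f)⁴ = 0`, then `θ₁ + θ₂ = 2θ₃`. -/
theorem e7_admissible_first_equation (K : Type*) [Field K]
    (θ₁ θ₂ θ₃ : K) (f g : RE7 K) (hg : g ∈ (JE7 K) ^ 3)
    (hf : f = θ₁ • (e7x K * e7y K) + θ₂ • (e7y K * e7x K) + θ₃ • (e7y K * e7y K) + g)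
    (hadm : (e7x K + e7y K + f) ^ 4 = 0) :
    θ₁ + θ₂ = 2 * θ₃ := by
  have hs4 : (e7x K + e7y K) ^ 4 = 0 := by
    have h := RingQuot.mkRingHom_rel (Rel7.pow (K := K))
    rw [map_pow, map_add, map_zero] at h
    rw [e7x, e7y]
    exact h
  have hx1 : e7x K ∈ JE7 K ^ 1 := by rw [pow_one]; exact xJ K
  have hy1 : e7y K ∈ JE7 K ^ 1 := by rw [pow_one]; exact yJ K
  have hs1 : e7x K + e7y K ∈ JE7 K ^ 1 := add_mem hx1 hy1
  have hm2 : (θ₁ • (e7x K * e7y K) + θ₂ • (e7y K * e7x K) + θ₃ • (e7y K * e7y K)) ∈ JE7 K ^ 2 := by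
    refine add_mem (add_mem (Submodule.smul_mem _ _ ?_) (Submodule.smul_mem _ _ ?_))
      (Submodule.smul_mem _ _ ?_)
    · exact mulmem K hx1 hy1
    · exact mulmem K hy1 hx1
    · exact mulmem K hy1 hy1
  have hg2 : g ∈ JE7 K ^ 2 := Jdrop K 1 hg
  have hq2 : (θ₁ • (e7x K * e7y K) + θ₂ • (e7y K * e7x K) + θ₃ • (e7y K * e7y K) + g) ∈ JE7 K ^ 2 := add_mem hm2 hg2
  rw [hf, expand4] at hadm
  have hcube : (e7x K + e7y K)*((e7x K + e7y K)*((e7x K + e7y K)*(e7x K + e7y K))) = 0 := by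
    rw [show ∀ a : RE7 K, a*(a*(a*a)) = a ^ 4 from fun a => by noncomm_ring, hs4]
  rw [hcube, zero_add] at hadm
  have hw1 : (e7x K + e7y K)*((e7x K + e7y K)*((e7x K + e7y K)*g)) ∈ JE7 K ^ 6 := mulmem K hs1 (mulmem K hs1 (mulmem K hs1 hg))
  have hw2 : (e7x K + e7y K)*((e7x K + e7y K)*(g*(e7x K + e7y K))) ∈ JE7 K ^ 6 := mulmem K hs1 (mulmem K hs1 (mulmem K hg hs1))
  have hw3 : (e7x K + e7y K)*(g*((e7x K + e7y K)*(e7x K + e7y K))) ∈ JE7 K ^ 6 := mulmem K hs1 (mulmem K hg (mulmem K hs1 hs1))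
  have hw4 : g*((e7x K + e7y K)*((e7x K + e7y K)*(e7x K + e7y K))) ∈ JE7 K ^ 6 := mulmem K hg (mulmem K hs1 (mulmem K hs1 hs1))
  have hw5 : (e7x K + e7y K)*((e7x K + e7y K)*((θ₁ • (e7x K * e7y K) + θ₂ • (e7y K * e7x K) + θ₃ • (e7y K * e7y K) + g)*(θ₁ • (e7x K * e7y K) + θ₂ • (e7y K * e7x K) + θ₃ • (e7y K * e7y K) + g))) ∈ JE7 K ^ 6 := mulmem K hs1 (mulmem K hs1 (mulmem K hq2 hq2))
  have hw6 : (e7x K + e7y K)*((θ₁ • (e7x K * e7y K) + θ₂ • (e7y K * e7x K) + θ₃ • (e7y K * e7y K) + g)*((e7x K + e7y K)*(θ₁ • (e7x K * e7y K) + θ₂ • (e7y K * e7x K) + θ₃ • (e7y K * e7y K) + g))) ∈ JE7 K ^ 6 := mulmem K hs1 (mulmem K hq2 (mulmem K hs1 hq2))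
  have hw7 : (e7x K + e7y K)*((θ₁ • (e7x K * e7y K) + θ₂ • (e7y K * e7x K) + θ₃ • (e7y K * e7y K) + g)*((θ₁ • (e7x K * e7y K) + θ₂ • (e7y K * e7x K) + θ₃ • (e7y K * e7y K) + g)*(e7x K + e7y K))) ∈ JE7 K ^ 6 := mulmem K hs1 (mulmem K hq2 (mulmem K hq2 hs1))
  have hw8 : (θ₁ • (e7x K * e7y K) + θ₂ • (e7y K * e7x K) + θ₃ • (e7y K * e7y K) + g)*((e7x K + e7y K)*((e7x K + e7y K)*(θ₁ • (e7x K * e7y K) + θ₂ • (e7y K * e7x K) + θ₃ • (e7y K * e7y K) + g))) ∈ JE7 K ^ 6 := mulmem K hq2 (mulmem K hs1 (mulmem K hs1 hq2))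
  have hw9 : (θ₁ • (e7x K * e7y K) + θ₂ • (e7y K * e7x K) + θ₃ • (e7y K * e7y K) + g)*((e7x K + e7y K)*((θ₁ • (e7x K * e7y K) + θ₂ • (e7y K * e7x K) + θ₃ • (e7y K * e7y K) + g)*(e7x K + e7y K))) ∈ JE7 K ^ 6 := mulmem K hq2 (mulmem K hs1 (mulmem K hq2 hs1))
  have hw10 : (θ₁ • (e7x K * e7y K) + θ₂ • (e7y K * e7x K) + θ₃ • (e7y K * e7y K) + g)*((θ₁ • (e7x K * e7y K) + θ₂ • (e7y K * e7x K) + θ₃ • (e7y K * e7y K) + g)*((e7x K + e7y K)*(e7x K + e7y K))) ∈ JE7 K ^ 6 := mulmem K hq2 (mulmem K hq2 (mulmem K hs1 hs1))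
  have hw11 : (e7x K + e7y K)*((θ₁ • (e7x K * e7y K) + θ₂ • (e7y K * e7x K) + θ₃ • (e7y K * e7y K) + g)*((θ₁ • (e7x K * e7y K) + θ₂ • (e7y K * e7x K) + θ₃ • (e7y K * e7y K) + g)*(θ₁ • (e7x K * e7y K) + θ₂ • (e7y K * e7x K) + θ₃ • (e7y K * e7y K) + g))) ∈ JE7 K ^ 6 := by have h7 : _ ∈ JE7 K ^ 7 := mulmem K hs1 (mulmem K hq2 (mulmem K hq2 hq2)); exact Jdrop K 5 h7
  have hw12 : (θ₁ • (e7x K * e7y K) + θ₂ • (e7y K * e7x K) + θ₃ • (e7y K * e7y K) + g)*((e7x K + e7y K)*((θ₁ • (e7x K * e7y K) + θ₂ • (e7y K * e7x K) + θ₃ • (e7y K * e7y K) + g)*(θ₁ • (e7x K * e7y K) + θ₂ • (e7y K * e7x K) + θ₃ • (e7y K * e7y K) + g))) ∈ JE7 K ^ 6 := by have h7 : _ ∈ JE7 K ^ 7 := mulmem K hq2 (mulmem K hs1 (mulmem K hq2 hq2)); exact Jdrop K 5 h7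
  have hw13 : (θ₁ • (e7x K * e7y K) + θ₂ • (e7y K * e7x K) + θ₃ • (e7y K * e7y K) + g)*((θ₁ • (e7x K * e7y K) + θ₂ • (e7y K * e7x K) + θ₃ • (e7y K * e7y K) + g)*((e7x K + e7y K)*(θ₁ • (e7x K * e7y K) + θ₂ • (e7y K * e7x K) + θ₃ • (e7y K * e7y K) + g))) ∈ JE7 K ^ 6 := by have h7 : _ ∈ JE7 K ^ 7 := mulmem K hq2 (mulmem K hq2 (mulmem K hs1 hq2)); exact Jdrop K 5 h7
  have hw14 : (θ₁ • (e7x K * e7y K) + θ₂ • (e7y K * e7x K) + θ₃ • (e7y K * e7y K) + g)*((θ₁ • (e7x K * e7y K) + θ₂ • (e7y K * e7x K) + θ₃ • (e7y K * e7y K) + g)*((θ₁ • (e7x K * e7y K) + θ₂ • (e7y K * e7x K) + θ₃ • (e7y K * e7y K) + g)*(e7x K + e7y K))) ∈ JE7 K ^ 6 := by have h7 : _ ∈ JE7 K ^ 7 := mulmem K hq2 (mulmem K hq2 (mulmem K hq2 hs1)); exact Jdrop K 5 h7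
  have hw15 : (θ₁ • (e7x K * e7y K) + θ₂ • (e7y K * e7x K) + θ₃ • (e7y K * e7y K) + g)*((θ₁ • (e7x K * e7y K) + θ₂ • (e7y K * e7x K) + θ₃ • (e7y K * e7y K) + g)*((θ₁ • (e7x K * e7y K) + θ₂ • (e7y K * e7x K) + θ₃ • (e7y K * e7y K) + g)*(θ₁ • (e7x K * e7y K) + θ₂ • (e7y K * e7x K) + θ₃ • (e7y K * e7y K) + g))) ∈ JE7 K ^ 6 := by have h8 : _ ∈ JE7 K ^ 8 := mulmem K hq2 (mulmem K hq2 (mulmem K hq2 hq2)); exact Jdrop K 5 (Jdrop K 6 h8)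
  have hW : ((e7x K + e7y K)*((e7x K + e7y K)*((e7x K + e7y K)*g)) + (e7x K + e7y K)*((e7x K + e7y K)*(g*(e7x K + e7y K))) + (e7x K + e7y K)*(g*((e7x K + e7y K)*(e7x K + e7y K))) + g*((e7x K + e7y K)*((e7x K + e7y K)*(e7x K + e7y K))) +
      ((e7x K + e7y K)*((e7x K + e7y K)*((θ₁ • (e7x K * e7y K) + θ₂ • (e7y K * e7x K) + θ₃ • (e7y K * e7y K) + g)*(θ₁ • (e7x K * e7y K) + θ₂ • (e7y K * e7x K) + θ₃ • (e7y K * e7y K) + g))) +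
       (e7x K + e7y K)*((θ₁ • (e7x K * e7y K) + θ₂ • (e7y K * e7x K) + θ₃ • (e7y K * e7y K) + g)*((e7x K + e7y K)*(θ₁ • (e7x K * e7y K) + θ₂ • (e7y K * e7x K) + θ₃ • (e7y K * e7y K) + g))) +
       (e7x K + e7y K)*((θ₁ • (e7x K * e7y K) + θ₂ • (e7y K * e7x K) + θ₃ • (e7y K * e7y K) + g)*((θ₁ • (e7x K * e7y K) + θ₂ • (e7y K * e7x K) + θ₃ • (e7y K * e7y K) + g)*(e7x K + e7y K))) +
       (θ₁ • (e7x K * e7y K) + θ₂ • (e7y K * e7x K) + θ₃ • (e7y K * e7y K) + g)*((e7x K + e7y K)*((e7x K + e7y K)*(θ₁ • (e7x K * e7y K) + θ₂ • (e7y K * e7x K) + θ₃ • (e7y K * e7y K) + g))) +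
       (θ₁ • (e7x K * e7y K) + θ₂ • (e7y K * e7x K) + θ₃ • (e7y K * e7y K) + g)*((e7x K + e7y K)*((θ₁ • (e7x K * e7y K) + θ₂ • (e7y K * e7x K) + θ₃ • (e7y K * e7y K) + g)*(e7x K + e7y K))) +
       (θ₁ • (e7x K * e7y K) + θ₂ • (e7y K * e7x K) + θ₃ • (e7y K * e7y K) + g)*((θ₁ • (e7x K * e7y K) + θ₂ • (e7y K * e7x K) + θ₃ • (e7y K * e7y K) + g)*((e7x K + e7y K)*(e7x K + e7y K))) +
       (e7x K + e7y K)*((θ₁ • (e7x K * e7y K) + θ₂ • (e7y K * e7x K) + θ₃ • (e7y K * e7y K) + g)*((θ₁ • (e7x K * e7y K) + θ₂ • (e7y K * e7x K) + θ₃ • (e7y K * e7y K) + g)*(θ₁ • (e7x K * e7y K) + θ₂ • (e7y K * e7x K) + θ₃ • (e7y K * e7y K) + g))) +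
       (θ₁ • (e7x K * e7y K) + θ₂ • (e7y K * e7x K) + θ₃ • (e7y K * e7y K) + g)*((e7x K + e7y K)*((θ₁ • (e7x K * e7y K) + θ₂ • (e7y K * e7x K) + θ₃ • (e7y K * e7y K) + g)*(θ₁ • (e7x K * e7y K) + θ₂ • (e7y K * e7x K) + θ₃ • (e7y K * e7y K) + g))) +
       (θ₁ • (e7x K * e7y K) + θ₂ • (e7y K * e7x K) + θ₃ • (e7y K * e7y K) + g)*((θ₁ • (e7x K * e7y K) + θ₂ • (e7y K * e7x K) + θ₃ • (e7y K * e7y K) + g)*((e7x K + e7y K)*(θ₁ • (e7x K * e7y K) + θ₂ • (e7y K * e7x K) + θ₃ • (e7y K * e7y K) + g))) +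
       (θ₁ • (e7x K * e7y K) + θ₂ • (e7y K * e7x K) + θ₃ • (e7y K * e7y K) + g)*((θ₁ • (e7x K * e7y K) + θ₂ • (e7y K * e7x K) + θ₃ • (e7y K * e7y K) + g)*((θ₁ • (e7x K * e7y K) + θ₂ • (e7y K * e7x K) + θ₃ • (e7y K * e7y K) + g)*(e7x K + e7y K))) +
       (θ₁ • (e7x K * e7y K) + θ₂ • (e7y K * e7x K) + θ₃ • (e7y K * e7y K) + g)*((θ₁ • (e7x K * e7y K) + θ₂ • (e7y K * e7x K) + θ₃ • (e7y K * e7y K) + g)*((θ₁ • (e7x K * e7y K) + θ₂ • (e7y K * e7x K) + θ₃ • (e7y K * e7y K) + g)*(θ₁ • (e7x K * e7y K) + θ₂ • (e7y K * e7x K) + θ₃ • (e7y K * e7y K) + g))))) ∈ JE7 K ^ 6 :=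
    add_mem (add_mem (add_mem (add_mem hw1 hw2) hw3) hw4) (add_mem (add_mem (add_mem (add_mem (add_mem (add_mem (add_mem (add_mem (add_mem (add_mem (hw5) hw6) hw7) hw8) hw9) hw10) hw11) hw12) hw13) hw14) hw15)
  have hφ := congrArg (φa K) hadm
  rw [map_add, map_zero, mapJ6 K _ hW, add_zero] at hφ
  simp only [map_add, map_mul, map_smul, φ_x, φ_y] at hφ
  simp only [← _root_.map_mul (cM K), ← _root_.map_add (cM K)] at hφ
  simp only [mul_add, add_mul, mul_smul_comm, smul_mul_assoc] at hφ
  simp only [← _root_.map_mul (cM K)] at hφ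
  have h70 := congrFun (congrFun hφ 7) 0
  simp only [Matrix.add_apply, Matrix.smul_apply, Matrix.zero_apply, smul_eq_mul,
    cM_apply] at h70
  rw [he1, he2, he3, he4, he5, he6, he7, he8, he9, he10, he11, he12] at h70
  push_cast at h70
  linear_combination h70
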